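/- For every integer ℓ ≥ 3, the least k such that the length-km prefix of the Thue-Morse word is not a k-anti-power, with m = 3·2^{ℓ-2} + 1, satisfies K(m) > 5·2^{2ℓ-3}/(3·2^{ℓ-2} + 1). -/

import Mathlib

open Filter

/-- The Thue-Morse word, indexed from 1: `tm i` is the parity of the number of
1's in the binary expansion of `i - 1`. -/
def tm (i : ℕ) : ℕ := (Nat.digits 2 (i - 1)).sum % 2

/-- The factor `t_a t_{a+1} ⋯ t_b` of the Thue-Morse word. -/
def seg (a b : ℕ) : List ℕ := (List.range (b + 1 - a)).map (fun j => tm (a + j))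

/-- The `i`-th block of length `m` of the Thue-Morse word (blocks indexed from 0):
`t_{im+1} ⋯ t_{(i+1)m}`. -/
def block (m i : ℕ) : List ℕ := seg (i * m + 1) ((i + 1) * m)

/-- The prefix of the Thue-Morse word of length `k * m` is a `k`-anti-power:
its `k` consecutive blocks of length `m` are pairwise distinct. -/
def IsAntiPowerPrefix (m k : ℕ) : Prop :=
  ∀ i j, i < k → j < k → i ≠ j → block m i ≠ block m j

/-- `w` is a factor (contiguous substring) of the Thue-Morse word. -/
def IsFactor (w : List ℕ) : Prop :=
  ∃ a : ℕ, w = (List.range w.length).map (fun j => tm (a + 1 + j))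

/-- `δ(m) = ⌈log₂ (m/3)⌉` (a nonnegative integer for `m ≥ 2`). -/
noncomputable def delta (m : ℕ) : ℕ := (⌈Real.logb 2 ((m : ℝ) / 3)⌉).toNat

/-- `⌈log₂ m⌉`. -/
noncomputable def ell (m : ℕ) : ℕ := (⌈Real.logb 2 (m : ℝ)⌉).toNat

/-- `K(m)`: the smallest `k` such that the prefix of the Thue-Morse word of
length `k * m` is not a `k`-anti-power. -/
noncomputable def Kap (m : ℕ) : ℕ := sInf {k | ¬ IsAntiPowerPrefix m k}

/-- `γ(k)`: the smallest odd positive integer `m` such that the prefix of the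
Thue-Morse word of length `k * m` is a `k`-anti-power. -/
noncomputable def gam (k : ℕ) : ℕ := sInf {m | Odd m ∧ IsAntiPowerPrefix m k}

/-- `Γ(k)`: the largest odd positive integer `m` such that the prefix of the
Thue-Morse word of length `k * m` is not a `k`-anti-power. -/
noncomputable def Gam (k : ℕ) : ℕ := sSup {m | Odd m ∧ ¬ IsAntiPowerPrefix m k}

/-- The Thue-Morse morphism `μ` (0 ↦ 01, 1 ↦ 10) on words. -/
def mu (w : List ℕ) : List ℕ := w.flatMap (fun a => if a = 0 then [0, 1] else [1, 0])

def tmu (n : ℕ) : ℕ := (Nat.digits 2 n).sum % 2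

lemma tmu_lt (n : ℕ) : tmu n < 2 := Nat.mod_lt _ two_pos

lemma tmu_zero : tmu 0 = 0 := by simp [tmu]

lemma tmu_one : tmu 1 = 1 := by simp [tmu]

lemma tmu_two_mul (n : ℕ) : tmu (2 * n) = tmu n := by
  rcases Nat.eq_zero_or_pos n with h | h
  · subst h; rfl
  · unfold tmu
    rw [Nat.digits_def' (by norm_num : 1 < 2) (by omega : 0 < 2 * n)]
    simp [Nat.mul_div_cancel_left _ (by norm_num : 0 < 2), Nat.mul_mod_right]

lemma tmu_two_mul_add_one (n : ℕ) : tmu (2 * n + 1) = (tmu n + 1) % 2 := by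
  unfold tmu
  rw [Nat.digits_def' (by norm_num : 1 < 2) (by omega : 0 < 2 * n + 1)]
  have h1 : (2 * n + 1) % 2 = 1 := by omega
  have h2 : (2 * n + 1) / 2 = n := by omega
  rw [h1, h2]
  simp [List.sum_cons]
  omega

lemma tmu_split (k : ℕ) : ∀ a r : ℕ, r < 2 ^ k → tmu (2 ^ k * a + r) = (tmu a + tmu r) % 2 := by
  induction k with
  | zero =>
    intro a r hr
    interval_cases r
    have := tmu_lt a
    simp [tmu_zero]
    omega
  | succ k ih =>
    intro a r hr
    have hsplit : r = 2 * (r / 2) + r % 2 := by omega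
    have hr2 : r / 2 < 2 ^ k := by
      have : 2 ^ (k + 1) = 2 * 2 ^ k := by ring
      omega
    rcases Nat.mod_two_eq_zero_or_one r with h | h
    · have e1 : 2 ^ (k + 1) * a + r = 2 * (2 ^ k * a + r / 2) := by ring_nf; omega
      rw [e1, tmu_two_mul, ih a (r / 2) hr2]
      conv_rhs => rw [hsplit, h]
      rw [Nat.add_zero, tmu_two_mul]
    · have e1 : 2 ^ (k + 1) * a + r = 2 * (2 ^ k * a + r / 2) + 1 := by ring_nf; omega
      rw [e1, tmu_two_mul_add_one, ih a (r / 2) hr2]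
      conv_rhs => rw [hsplit, h]
      rw [tmu_two_mul_add_one]
      omega

lemma noTriple (n : ℕ) : ¬ (tmu n = tmu (n + 1) ∧ tmu (n + 1) = tmu (n + 2)) := by
  rintro ⟨h1, h2⟩
  rcases Nat.even_or_odd n with ⟨c, hc⟩ | ⟨c, hc⟩
  · have e1 : n = 2 * c := by omega
    have e2 : n + 1 = 2 * c + 1 := by omega
    rw [e1] at h1; rw [tmu_two_mul, tmu_two_mul_add_one] at h1
    have := tmu_lt c; omega
  · have e2 : n + 1 = 2 * (c + 1) := by omega
    have e3 : n + 2 = 2 * (c + 1) + 1 := by omega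
    rw [e3] at h2; rw [e2] at h2; rw [tmu_two_mul, tmu_two_mul_add_one] at h2
    have := tmu_lt (c + 1); omega

lemma tmu_pow (k : ℕ) : tmu (2 ^ k) = 1 := by
  have := tmu_split k 1 0 (Nat.pow_pos (by norm_num))
  simpa [tmu_one, tmu_zero] using this

lemma tmu_pow_sub_one (k : ℕ) : tmu (2 ^ k - 1) = k % 2 := by
  induction k with
  | zero => simpa using tmu_zero
  | succ k ih =>
    have h : 2 ^ (k + 1) - 1 = 2 * (2 ^ k - 1) + 1 := by
      have : 0 < 2 ^ k := Nat.pow_pos (by norm_num)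
      ring_nf; omega
    rw [h, tmu_two_mul_add_one, ih]
    omega

lemma sync0_core (a b : ℕ) (h : ∀ s < 4, tmu (2 * a + s) = tmu (2 * b + 1 + s)) : False := by
  have h0 := h 0 (by omega); have h1 := h 1 (by omega)
  have h2 := h 2 (by omega); have h3 := h 3 (by omega)
  rw [show 2*a+0 = 2*a by ring, show 2*b+1+0 = 2*b+1 by ring, tmu_two_mul,
    tmu_two_mul_add_one] at h0
  rw [show 2*a+1 = 2*a+1 by ring, show 2*b+1+1 = 2*(b+1) by ring, tmu_two_mul_add_one,
    tmu_two_mul] at h1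
  rw [show 2*a+2 = 2*(a+1) by ring, show 2*b+1+2 = 2*(b+1)+1 by ring, tmu_two_mul,
    tmu_two_mul_add_one] at h2
  rw [show 2*a+3 = 2*(a+1)+1 by ring, show 2*b+1+3 = 2*(b+2) by ring, tmu_two_mul_add_one,
    tmu_two_mul] at h3
  have la := tmu_lt a; have la1 := tmu_lt (a+1)
  have lb := tmu_lt b; have lb1 := tmu_lt (b+1); have lb2 := tmu_lt (b+2)
  exact noTriple b ⟨by omega, by omega⟩

lemma sync0 (p q : ℕ) (h : ∀ s < 4, tmu (p + s) = tmu (q + s)) : p % 2 = q % 2 := by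
  by_contra hne
  rcases Nat.mod_two_eq_zero_or_one p with hp | hp <;>
    rcases Nat.mod_two_eq_zero_or_one q with hq | hq
  · omega
  · exact sync0_core (p/2) (q/2) (by
      intro s hs
      rw [show 2*(p/2)+s = p+s by omega, show 2*(q/2)+1+s = q+s by omega]
      exact h s hs)
  · exact sync0_core (q/2) (p/2) (by
      intro s hs
      rw [show 2*(q/2)+s = q+s by omega, show 2*(p/2)+1+s = p+s by omega]
      exact (h s hs).symm)
  · omega

lemma mod_double_even (a b M : ℕ) (h : a % M = b % M) :
    (2 * a) % (2 * M) = (2 * b) % (2 * M) := by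
  rw [Nat.mul_mod_mul_left, Nat.mul_mod_mul_left, h]

lemma mod_double_odd (a b M : ℕ) (hM : 0 < M) (h : a % M = b % M) :
    (2 * a + 1) % (2 * M) = (2 * b + 1) % (2 * M) := by
  have key : ∀ c : ℕ, (2 * c + 1) % (2 * M) = 2 * (c % M) + 1 := by
    intro c
    have h1 : 2 * c + 1 = (2 * (c % M) + 1) + (2 * M) * (c / M) := by
      rw [mul_assoc]; have := Nat.div_add_mod c M; omega
    rw [h1, Nat.add_mul_mod_self_left, Nat.mod_eq_of_lt (by have := Nat.mod_lt c hM; omega)]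
  rw [key a, key b, h]

lemma sync (D : ℕ) : ∀ p q : ℕ,
    (∀ s < 3 * 2 ^ D + 1, tmu (p + s) = tmu (q + s)) → p % 2 ^ (D + 1) = q % 2 ^ (D + 1) := by
  induction D with
  | zero =>
    intro p q h
    exact sync0 p q (fun s hs => h s (by omega))
  | succ D ih =>
    intro p q h
    have hlen : (4:ℕ) ≤ 3 * 2 ^ (D+1) + 1 := by
      have : (1:ℕ) ≤ 2 ^ (D+1) := Nat.one_le_two_pow; omega
    have hpar : p % 2 = q % 2 := sync0 p q (fun s hs => h s (by omega))
    have hstep : ∀ t < 3 * 2 ^ D + 1, (2 * t : ℕ) < 3 * 2 ^ (D + 1) + 1 := by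
      intro t ht
      have : (2:ℕ) ^ (D+1) = 2 * 2 ^ D := by ring
      omega
    have hpow : (2:ℕ) ^ (D + 1 + 1) = 2 * 2 ^ (D + 1) := by ring
    have hMpos : (0:ℕ) < 2 ^ (D + 1) := Nat.pow_pos (by norm_num)
    rcases Nat.mod_two_eq_zero_or_one p with hp | hp
    · -- both even
      have hq2 : q % 2 = 0 := by omega
      have hab : (p/2) % 2 ^ (D+1) = (q/2) % 2 ^ (D+1) := by
        apply ih
        intro t ht
        have := h (2*t) (hstep t ht)
        rw [show p + 2*t = 2*(p/2 + t) by omega, show q + 2*t = 2*(q/2 + t) by omega,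
          tmu_two_mul, tmu_two_mul] at this
        exact this
      have := mod_double_even (p/2) (q/2) (2 ^ (D+1)) hab
      rw [show 2*(p/2) = p by omega, show 2*(q/2) = q by omega, ← hpow] at this
      exact this
    · -- both odd
      have hq2 : q % 2 = 1 := by omega
      have hab : (p/2) % 2 ^ (D+1) = (q/2) % 2 ^ (D+1) := by
        apply ih
        intro t ht
        have := h (2*t) (hstep t ht)
        rw [show p + 2*t = 2*(p/2 + t) + 1 by omega, show q + 2*t = 2*(q/2 + t) + 1 by omega,
          tmu_two_mul_add_one, tmu_two_mul_add_one] at this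
        have l1 := tmu_lt (p/2 + t); have l2 := tmu_lt (q/2 + t)
        omega
      have := mod_double_odd (p/2) (q/2) (2 ^ (D+1)) hMpos hab
      rw [show 2*(p/2)+1 = p by omega, show 2*(q/2)+1 = q by omega, ← hpow] at this
      exact this

lemma key (e q : ℕ) (he : 1 ≤ e) (hq : q + 3 ≤ 2 * 2 ^ e)
    (h1 : tmu q = tmu (q + (3 * 2 ^ e + 1)))
    (h2 : tmu (q + 1) = tmu (q + 1 + (3 * 2 ^ e + 1))) : False := by
  have hP1 : (2:ℕ) ^ (e + 1) = 2 * 2 ^ e := by ring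
  have hP2 : (2:ℕ) ^ (e + 2) = 4 * 2 ^ e := by ring
  have hPe : (2:ℕ) ^ e = 2 * 2 ^ (e - 1) := by
    conv_lhs => rw [show e = (e - 1) + 1 by omega]
    ring
  have hone : (1:ℕ) ≤ 2 ^ (e-1) := Nat.one_le_two_pow
  by_cases hA : q + 2 < 2 ^ e
  · -- case A : q + 2 < 2^e
    have c1 : tmu (q + (3 * 2 ^ e + 1)) = tmu (q + 1) := by
      have e1 : q + (3 * 2 ^ e + 1) = 2 ^ (e+1) * 1 + (q + 2 ^ e + 1) := by ring
      rw [e1, tmu_split (e+1) 1 (q + 2 ^ e + 1) (by omega),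
        show q + 2 ^ e + 1 = 2 ^ e * 1 + (q + 1) by ring,
        tmu_split e 1 (q + 1) (by omega), tmu_one]
      have := tmu_lt (q+1); omega
    have c2 : tmu (q + 1 + (3 * 2 ^ e + 1)) = tmu (q + 2) := by
      have e1 : q + 1 + (3 * 2 ^ e + 1) = 2 ^ (e+1) * 1 + (q + 2 ^ e + 2) := by ring
      rw [e1, tmu_split (e+1) 1 (q + 2 ^ e + 2) (by omega),
        show q + 2 ^ e + 2 = 2 ^ e * 1 + (q + 2) by ring,
        tmu_split e 1 (q + 2) (by omega), tmu_one]
      have := tmu_lt (q+2); omega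
    rw [c1] at h1; rw [c2] at h2
    exact noTriple q ⟨h1, h2⟩
  by_cases hB : q + 2 = 2 ^ e
  · -- case B : q = 2^e - 2
    have c0 : tmu q = (e - 1) % 2 := by
      rw [show q = 2 * (2 ^ (e-1) - 1) by omega, tmu_two_mul, tmu_pow_sub_one]
    have c1 : tmu (q + (3 * 2 ^ e + 1)) = (e + 2) % 2 := by
      rw [show q + (3 * 2 ^ e + 1) = 2 ^ (e + 2) - 1 by omega, tmu_pow_sub_one]
    rw [c0, c1] at h1; omega
  by_cases hC : q + 1 = 2 ^ e
  · -- case C : q = 2^e - 1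
    have c0 : tmu (q + 1) = 1 := by rw [show q + 1 = 2 ^ e by omega, tmu_pow]
    have c1 : tmu (q + 1 + (3 * 2 ^ e + 1)) = 0 := by
      rw [show q + 1 + (3 * 2 ^ e + 1) = 2 ^ (e + 2) * 1 + 1 by omega,
        tmu_split (e+2) 1 1 (by omega), tmu_one]
    rw [c0, c1] at h2; omega
  · -- case D : q ≥ 2^e
    obtain ⟨r, hr⟩ : ∃ r, q = 2 ^ e + r := ⟨q - 2 ^ e, by omega⟩
    have hr3 : r + 3 ≤ 2 ^ e := by omega
    have c0 : tmu q = (tmu r + 1) % 2 := by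
      rw [show q = 2 ^ e * 1 + r by omega, tmu_split e 1 r (by omega), tmu_one]; omega
    have c1 : tmu (q + (3 * 2 ^ e + 1)) = (tmu (r + 1) + 1) % 2 := by
      rw [show q + (3 * 2 ^ e + 1) = 2 ^ (e+2) * 1 + (r + 1) by omega,
        tmu_split (e+2) 1 (r+1) (by omega), tmu_one]; omega
    have c2 : tmu (q + 1) = (tmu (r + 1) + 1) % 2 := by
      rw [show q + 1 = 2 ^ e * 1 + (r + 1) by omega, tmu_split e 1 (r+1) (by omega), tmu_one]
      omega
    have c3 : tmu (q + 1 + (3 * 2 ^ e + 1)) = (tmu (r + 2) + 1) % 2 := by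
      rw [show q + 1 + (3 * 2 ^ e + 1) = 2 ^ (e+2) * 1 + (r + 2) by omega,
        tmu_split (e+2) 1 (r+2) (by omega), tmu_one]; omega
    rw [c0, c1] at h1; rw [c2, c3] at h2
    have l1 := tmu_lt r; have l2 := tmu_lt (r+1); have l3 := tmu_lt (r+2)
    exact noTriple r ⟨by omega, by omega⟩

lemma tm_succ (n : ℕ) : tm (n + 1) = tmu n := rfl

lemma block_eq (m i : ℕ) : block m i = (List.range m).map (fun s => tmu (i * m + s)) := by
  unfold block seg
  have h : (i + 1) * m + 1 - (i * m + 1) = m := by rw [add_mul, one_mul]; omega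
  rw [h]
  apply List.map_congr_left
  intro a _
  rw [show i * m + 1 + a = (i * m + a) + 1 by ring, tm_succ]

lemma map_range_inj {m : ℕ} {f g : ℕ → ℕ}
    (h : (List.range m).map f = (List.range m).map g) {s : ℕ} (hs : s < m) : f s = g s := by
  have := congrArg (fun l => l[s]?) h
  simpa [List.getElem?_map, List.getElem?_range, hs] using this

lemma exists_not_anti (m : ℕ) : ∃ k, ¬ IsAntiPowerPrefix m k := by
  obtain ⟨i, j, hne, hf⟩ := Finite.exists_ne_map_eq_of_infinite
    (fun i : ℕ => (fun s : Fin m => (⟨tmu (i * m + s.val) % 2, Nat.mod_lt _ two_pos⟩ : Fin 2)))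
  have hblock : block m i = block m j := by
    rw [block_eq, block_eq]
    apply List.map_congr_left
    intro a ha
    have ha' : a < m := List.mem_range.mp ha
    have := congrFun hf ⟨a, ha'⟩
    have h2 : tmu (i * m + a) % 2 = tmu (j * m + a) % 2 := congrArg Fin.val this
    have l1 := tmu_lt (i * m + a); have l2 := tmu_lt (j * m + a)
    omega
  exact ⟨max i j + 1, fun hap =>
    hap i j (by omega) (by omega) hne hblock⟩

lemma lower (D : ℕ) (hD : 1 ≤ D) (k : ℕ)
    (hk : k ≤ 5 * 2 ^ (2 * D + 1) / (3 * 2 ^ D + 1)) :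
    IsAntiPowerPrefix (3 * 2 ^ D + 1) k := by
  have hX : (2:ℕ) ≤ 2 ^ D := by
    calc (2:ℕ) = 2 ^ 1 := by norm_num
    _ ≤ 2 ^ D := Nat.pow_le_pow_right (by norm_num) hD
  have hP1 : (2:ℕ) ^ (D + 1) = 2 * 2 ^ D := by ring
  have hP2 : (2:ℕ) ^ (2 * D + 1) = 2 * (2 ^ D * 2 ^ D) := by ring
  have hNpos : (0:ℕ) < 2 ^ (D + 1) := Nat.pow_pos (by norm_num)
  suffices H : ∀ a b, a < b → b < k → block (3 * 2 ^ D + 1) a ≠ block (3 * 2 ^ D + 1) b by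
    intro i j hi hj hij
    rcases Nat.lt_or_ge i j with h | h
    · exact H i j h hj
    · have hji : j < i := by omega
      exact fun he => H j i hji hi he.symm
  intro a b hab hbk heq
  -- pointwise equality
  have hpt : ∀ s < 3 * 2 ^ D + 1,
      tmu (a * (3 * 2 ^ D + 1) + s) = tmu (b * (3 * 2 ^ D + 1) + s) := by
    intro s hs
    have hmaps : (List.range (3 * 2 ^ D + 1)).map (fun s => tmu (a * (3 * 2 ^ D + 1) + s))
        = (List.range (3 * 2 ^ D + 1)).map (fun s => tmu (b * (3 * 2 ^ D + 1) + s)) := by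
      rw [← block_eq, ← block_eq]; exact heq
    exact map_range_inj hmaps hs
  -- synchronization
  have hsync := sync D _ _ hpt
  have hle : a * (3 * 2 ^ D + 1) ≤ b * (3 * 2 ^ D + 1) :=
    Nat.mul_le_mul_right _ hab.le
  have hdvd1 : 2 ^ (D + 1) ∣ (b - a) * (3 * 2 ^ D + 1) := by
    rw [Nat.sub_mul]
    exact (Nat.modEq_iff_dvd' hle).mp hsync
  have hco : Nat.Coprime (2 ^ (D + 1)) (3 * 2 ^ D + 1) := by
    apply Nat.Coprime.pow_left
    refine (Nat.prime_two.coprime_iff_not_dvd).mpr ?_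
    have h2d : 2 ∣ 2 ^ D := dvd_pow_self 2 (by omega)
    omega
  have hdvd : 2 ^ (D + 1) ∣ (b - a) := hco.dvd_of_dvd_mul_right hdvd1
  -- k * m ≤ 5 * 2^(2D+1)
  have hkm : k * (3 * 2 ^ D + 1) ≤ 5 * 2 ^ (2 * D + 1) :=
    le_trans (Nat.mul_le_mul_right _ hk) (Nat.div_mul_le_self _ _)
  -- b = a + 2^(D+1)
  obtain ⟨c, hc⟩ := hdvd
  have hcpos : 1 ≤ c := by
    rcases Nat.eq_zero_or_pos c with h0 | h
    · rw [h0, mul_zero] at hc; omega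
    · exact h
  have hba : b = a + 2 ^ (D + 1) := by
    have hc1 : c = 1 := by
      by_contra hcne
      have hc2 : 2 ≤ c := by omega
      have hge : 2 ^ (D + 1) * 2 ≤ 2 ^ (D + 1) * c := Nat.mul_le_mul_left _ hc2
      have hge2 : 2 ^ (D + 1) * 2 ≤ b - a := by rw [hc]; exact hge
      have e0 : (2:ℕ) ^ (D + 1) * 2 = 4 * 2 ^ D := by ring
      have hb4 : 4 * 2 ^ D + 1 ≤ k := by omega
      have hmul := Nat.mul_le_mul_right (3 * 2 ^ D + 1) hb4
      have hfin : (4 * 2 ^ D + 1) * (3 * 2 ^ D + 1) ≤ 5 * 2 ^ (2 * D + 1) :=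
        le_trans hmul hkm
      have e1 : (4 * 2 ^ D + 1) * (3 * 2 ^ D + 1)
          = 12 * (2 ^ D * 2 ^ D) + 7 * 2 ^ D + 1 := by ring
      omega
    rw [hc1, mul_one] at hc; omega
  -- division with remainder
  obtain ⟨q, r0, hr0, hPq⟩ : ∃ q r0, r0 < 2 ^ (D + 1) ∧
      2 ^ (D + 1) * q + r0 = a * (3 * 2 ^ D + 1) :=
    ⟨a * (3 * 2 ^ D + 1) / 2 ^ (D + 1), a * (3 * 2 ^ D + 1) % 2 ^ (D + 1),
      Nat.mod_lt _ hNpos, Nat.div_add_mod _ _⟩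
  have hbm : b * (3 * 2 ^ D + 1)
      = a * (3 * 2 ^ D + 1) + 2 ^ (D + 1) * (3 * 2 ^ D + 1) := by
    rw [hba, add_mul]
  -- bound on q
  have hbound : q + 3 ≤ 2 * 2 ^ D := by
    have hk1 : a + 2 ^ (D + 1) + 1 ≤ k := by omega
    have h1 : (a + 2 ^ (D + 1) + 1) * (3 * 2 ^ D + 1) ≤ 5 * 2 ^ (2 * D + 1) :=
      le_trans (Nat.mul_le_mul_right _ hk1) hkm
    have e1 : (a + 2 ^ (D + 1) + 1) * (3 * 2 ^ D + 1)
        = a * (3 * 2 ^ D + 1) + (6 * (2 ^ D * 2 ^ D) + 5 * 2 ^ D + 1) := by ring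
    rw [e1] at h1
    by_contra hcon
    push_neg at hcon
    have hqge : 2 * 2 ^ D ≤ q + 2 := by omega
    have hmul := Nat.mul_le_mul_left (2 ^ (D + 1)) hqge
    have e2 : (2:ℕ) ^ (D + 1) * (q + 2) = 2 ^ (D + 1) * q + 4 * 2 ^ D := by ring
    have e3 : (2:ℕ) ^ (D + 1) * (2 * 2 ^ D) = 4 * (2 ^ D * 2 ^ D) := by ring
    rw [e2, e3] at hmul
    omega
  -- first equation
  have hE1 : tmu q = tmu (q + (3 * 2 ^ D + 1)) := by
    have h0 := hpt 0 (by omega)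
    have edist : (2:ℕ) ^ (D + 1) * (q + (3 * 2 ^ D + 1))
        = 2 ^ (D + 1) * q + 2 ^ (D + 1) * (3 * 2 ^ D + 1) := by ring
    rw [show a * (3 * 2 ^ D + 1) + 0 = 2 ^ (D + 1) * q + r0 by omega,
      show b * (3 * 2 ^ D + 1) + 0 = 2 ^ (D + 1) * (q + (3 * 2 ^ D + 1)) + r0 by omega] at h0
    rw [tmu_split (D + 1) q r0 hr0,
      tmu_split (D + 1) (q + (3 * 2 ^ D + 1)) r0 hr0] at h0
    have l1 := tmu_lt q; have l2 := tmu_lt (q + (3 * 2 ^ D + 1)); have l3 := tmu_lt r0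
    omega
  -- second equation
  have hE2 : tmu (q + 1) = tmu (q + 1 + (3 * 2 ^ D + 1)) := by
    have hslt : 2 ^ (D + 1) - r0 < 3 * 2 ^ D + 1 := by omega
    have h0 := hpt (2 ^ (D + 1) - r0) hslt
    have ed1 : (2:ℕ) ^ (D + 1) * (q + 1) = 2 ^ (D + 1) * q + 2 ^ (D + 1) := by ring
    have ed2 : (2:ℕ) ^ (D + 1) * (q + 1 + (3 * 2 ^ D + 1))
        = 2 ^ (D + 1) * q + 2 ^ (D + 1) + 2 ^ (D + 1) * (3 * 2 ^ D + 1) := by ring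
    rw [show a * (3 * 2 ^ D + 1) + (2 ^ (D + 1) - r0) = 2 ^ (D + 1) * (q + 1) + 0 by omega,
      show b * (3 * 2 ^ D + 1) + (2 ^ (D + 1) - r0)
        = 2 ^ (D + 1) * (q + 1 + (3 * 2 ^ D + 1)) + 0 by omega] at h0
    rw [tmu_split (D + 1) (q + 1) 0 hNpos,
      tmu_split (D + 1) (q + 1 + (3 * 2 ^ D + 1)) 0 hNpos, tmu_zero] at h0
    have l1 := tmu_lt (q + 1); have l2 := tmu_lt (q + 1 + (3 * 2 ^ D + 1))
    omega
  exact key D q hD hbound hE1 hE2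

theorem stmt18 (ℓ : ℕ) (hℓ : 3 ≤ ℓ) :
    (5 * 2 ^ (2 * ℓ - 3) : ℝ) / (3 * 2 ^ (ℓ - 2) + 1) <
      (Kap (3 * 2 ^ (ℓ - 2) + 1) : ℝ) := by
  have hD : 1 ≤ ℓ - 2 := by omega
  have e23 : 2 * ℓ - 3 = 2 * (ℓ - 2) + 1 := by omega
  have hmpos : 0 < 3 * 2 ^ (ℓ - 2) + 1 := by positivity
  have hKB : 5 * 2 ^ (2 * (ℓ - 2) + 1) / (3 * 2 ^ (ℓ - 2) + 1) + 1
      ≤ Kap (3 * 2 ^ (ℓ - 2) + 1) := by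
    apply le_csInf (exists_not_anti _)
    intro b hb
    by_contra hlt
    push_neg at hlt
    exact hb (lower (ℓ - 2) hD b (by omega))
  have h1 : 5 * 2 ^ (2 * (ℓ - 2) + 1)
      < (5 * 2 ^ (2 * (ℓ - 2) + 1) / (3 * 2 ^ (ℓ - 2) + 1) + 1) * (3 * 2 ^ (ℓ - 2) + 1) := by
    rw [add_mul, one_mul]
    have hdm := Nat.div_add_mod (5 * 2 ^ (2 * (ℓ - 2) + 1)) (3 * 2 ^ (ℓ - 2) + 1)
    have h2 := Nat.mod_lt (5 * 2 ^ (2 * (ℓ - 2) + 1)) hmpos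
    have e4 : 5 * 2 ^ (2 * (ℓ - 2) + 1) / (3 * 2 ^ (ℓ - 2) + 1) * (3 * 2 ^ (ℓ - 2) + 1)
        = (3 * 2 ^ (ℓ - 2) + 1) * (5 * 2 ^ (2 * (ℓ - 2) + 1) / (3 * 2 ^ (ℓ - 2) + 1)) := by
      ring
    omega
  have h2 : (5 * 2 ^ (2 * (ℓ - 2) + 1) / (3 * 2 ^ (ℓ - 2) + 1) + 1) * (3 * 2 ^ (ℓ - 2) + 1)
      ≤ Kap (3 * 2 ^ (ℓ - 2) + 1) * (3 * 2 ^ (ℓ - 2) + 1) :=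
    Nat.mul_le_mul_right _ hKB
  have h3 : 5 * 2 ^ (2 * (ℓ - 2) + 1)
      < Kap (3 * 2 ^ (ℓ - 2) + 1) * (3 * 2 ^ (ℓ - 2) + 1) := lt_of_lt_of_le h1 h2
  have hden : ((3:ℝ) * 2 ^ (ℓ - 2) + 1) = ((3 * 2 ^ (ℓ - 2) + 1 : ℕ) : ℝ) := by
    push_cast; ring
  rw [e23, hden, div_lt_iff₀ (by exact_mod_cast hmpos)]
  exact_mod_cast h3
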